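/- The completion of 𝔽_q(t) at the place at infinity is the field of Laurent series in t^{-1}: there is an isomorphism of topological 𝔽_q-algebras between the completion of the field 𝔽_q(t) with respect to the valuation at infinity (the valuation whose value on a nonzero rational function f is determined by −intDegree(f)) and the field 𝔽_q((u)) of formal Laurent series over 𝔽_q, under which the image of t in the completion corresponds to u^{-1}. -/

import Mathlib

/-- The canonical map from `𝔽_q(t)` to its completion at the place at infinity. -/
noncomputable def ratFuncToFqtInfty (Fq : Type) [Field Fq] [DecidableEq (RatFunc Fq)] (x : RatFunc Fq) :
    RatFunc.CompletionAtInfty Fq :=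
  @UniformSpace.Completion.coe' (RatFunc Fq)
    (RatFunc.inftyValued Fq).toUniformSpace x

open scoped nonZeroDivisors
open Polynomial RatFunc FunctionField IsDedekindDomain.HeightOneSpectrum Multiplicative

noncomputable section
set_option synthInstance.maxHeartbeats 1000000
set_option maxHeartbeats 1000000

variable (K : Type) [Field K] [DecidableEq (RatFunc K)]

def invPolyHom : K[X] →+* RatFunc K :=
  Polynomial.eval₂RingHom (algebraMap K (RatFunc K)) (RatFunc.X : RatFunc K)⁻¹

lemma eval₂_ratFuncX (p : K[X]) :
    Polynomial.eval₂ (algebraMap K (RatFunc K)) RatFunc.X p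
      = algebraMap K[X] (RatFunc K) p := by
  conv_rhs => rw [← Polynomial.eval₂_C_X (p := p)]
  rw [Polynomial.hom_eval₂, ← Polynomial.algebraMap_eq, ← IsScalarTower.algebraMap_eq,
    RatFunc.algebraMap_X]

lemma invPolyHom_eq (p : K[X]) :
    invPolyHom K p = algebraMap K[X] (RatFunc K) p.reverse
      * (RatFunc.X : RatFunc K)⁻¹ ^ p.natDegree := by
  letI : Invertible (RatFunc.X : RatFunc K)⁻¹ :=
    invertibleOfNonzero (inv_ne_zero RatFunc.X_ne_zero)
  have h := Polynomial.eval₂_reverse_mul_pow (algebraMap K (RatFunc K))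
    ((RatFunc.X : RatFunc K)⁻¹) p
  rw [invOf_eq_inv, inv_inv, eval₂_ratFuncX] at h
  simpa [invPolyHom] using h.symm

lemma invPolyHom_ne_zero {p : K[X]} (hp : p ≠ 0) : invPolyHom K p ≠ 0 := by
  rw [invPolyHom_eq]
  exact mul_ne_zero (RatFunc.algebraMap_ne_zero (by simpa [Polynomial.reverse_eq_zero] using hp))
    (pow_ne_zero _ (inv_ne_zero RatFunc.X_ne_zero))

lemma invPolyHom_mem : K[X]⁰ ≤ Submonoid.comap (invPolyHom K) (nonZeroDivisors (RatFunc K)) := fun p hp =>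
  mem_nonZeroDivisors_of_ne_zero (invPolyHom_ne_zero K (nonZeroDivisors.ne_zero hp))

def sigmaInv : RatFunc K →+* RatFunc K := RatFunc.liftRingHom (invPolyHom K) (invPolyHom_mem K)

lemma sigmaInv_algebraMap (p : K[X]) :
    sigmaInv K (algebraMap K[X] (RatFunc K) p) = invPolyHom K p := by
  simpa [sigmaInv] using RatFunc.liftRingHom_apply_div (invPolyHom K) (invPolyHom_mem K) p 1

lemma sigmaInv_X : sigmaInv K RatFunc.X = (RatFunc.X : RatFunc K)⁻¹ := by
  rw [← RatFunc.algebraMap_X, sigmaInv_algebraMap]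
  simp [invPolyHom]

lemma sigmaInv_C (c : K) : sigmaInv K (RatFunc.C c) = RatFunc.C c := by
  rw [← RatFunc.algebraMap_C, sigmaInv_algebraMap]
  simp [invPolyHom, ← RatFunc.algebraMap_C, IsScalarTower.algebraMap_eq K K[X] (RatFunc K),
    Polynomial.algebraMap_eq]

lemma sigmaInv_sigmaInv (f : RatFunc K) : sigmaInv K (sigmaInv K f) = f := by
  have key : ((sigmaInv K).comp (sigmaInv K)).comp (algebraMap K[X] (RatFunc K))
      = algebraMap K[X] (RatFunc K) := by
    apply Polynomial.ringHom_ext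
    · intro c
      simp [RatFunc.algebraMap_C, sigmaInv_C]
    · simp [RatFunc.algebraMap_X, sigmaInv_X, map_inv₀]
  have hnum := RingHom.congr_fun key f.num
  have hden := RingHom.congr_fun key f.denom
  simp only [RingHom.comp_apply] at hnum hden
  conv_lhs => rw [← RatFunc.num_div_denom f]
  rw [map_div₀, map_div₀, hnum, hden, RatFunc.num_div_denom]

lemma intValuation_reverse {p : K[X]} (hp : p ≠ 0) :
    (Polynomial.idealX K).intValuation p.reverse = 1 := by
  apply le_antisymm ((Polynomial.idealX K).intValuation_le_one _)
  by_contra h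
  rw [not_le] at h
  have h2 := ((Polynomial.idealX K).intValuation_lt_one_iff_dvd _).mp h
  rw [Polynomial.idealX_span, span_singleton_dvd_span_singleton_iff_dvd,
    Polynomial.X_dvd_iff, Polynomial.coeff_zero_reverse] at h2
  exact hp (Polynomial.leadingCoeff_eq_zero.mp h2)

lemma valuation_invPolyHom {p : K[X]} (hp : p ≠ 0) :
    (Polynomial.idealX K).valuation (RatFunc K) (invPolyHom K p)
      = (Multiplicative.ofAdd (p.natDegree : ℤ) : Multiplicative ℤ) := by
  rw [invPolyHom_eq, map_mul, valuation_of_algebraMap, intValuation_reverse K hp, one_mul,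
    map_pow, map_inv₀, Polynomial.valuation_X_eq_neg_one]
  rw [← WithZero.exp_neg, ← WithZero.exp_nsmul, neg_neg, nsmul_one]
  rfl

lemma valuation_sigmaInv (f : RatFunc K) :
    (Polynomial.idealX K).valuation (RatFunc K) (sigmaInv K f) = RatFunc.inftyValuation K f := by
  by_cases hf : f = 0
  · simp [hf, RatFunc.inftyValuationDef]
  · rw [show sigmaInv K f = RatFunc.liftRingHom (invPolyHom K) (invPolyHom_mem K) f from rfl,
      RatFunc.liftRingHom_apply, map_div₀,
      valuation_invPolyHom K (RatFunc.num_ne_zero hf),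
      valuation_invPolyHom K f.denom_ne_zero, RatFunc.inftyValuation_apply,
      RatFunc.inftyValuation_of_nonzero K hf, RatFunc.intDegree, ← WithZero.coe_div]
    rfl


lemma valuation_sigmaInv' (f : RatFunc K) :
    RatFunc.inftyValuation K (sigmaInv K f) = (Polynomial.idealX K).valuation (RatFunc K) f := by
  conv_rhs => rw [← sigmaInv_sigmaInv K f]
  rw [valuation_sigmaInv]

lemma uc_of_val_eq {R S : Type*} [Field R] [Field S] (v1 : Valued R (WithZero (Multiplicative ℤ))) (v2 : Valued S (WithZero (Multiplicative ℤ)))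
    (f : R →+* S) (hf : Function.Surjective f)
    (h : ∀ x, @Valued.v S _ (WithZero (Multiplicative ℤ)) _ v2 (f x) = @Valued.v R _ (WithZero (Multiplicative ℤ)) _ v1 x) :
    @UniformContinuous R S v1.toUniformSpace v2.toUniformSpace f := by
  letI := v1; letI := v2
  refine ((Valued.hasBasis_uniformity R (WithZero (Multiplicative ℤ))).tendsto_iff (Valued.hasBasis_uniformity S (WithZero (Multiplicative ℤ)))).mpr ?_
  intro γ _
  obtain ⟨r, s, hr, hs, hrs⟩ := Valuation.restrict_exists_div_eq (Valued.v : Valuation S (WithZero (Multiplicative ℤ))) γ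
  obtain ⟨r', rfl⟩ := hf r
  obtain ⟨s', rfl⟩ := hf s
  have hs' : 0 < (Valued.v : Valuation R (WithZero (Multiplicative ℤ))) s' := by rw [← h]; exact hs
  have hr' : 0 < (Valued.v : Valuation R (WithZero (Multiplicative ℤ))) r' := by rw [← h]; exact hr
  refine ⟨Units.mk0 ((Valued.v : Valuation R (WithZero (Multiplicative ℤ))).restrict r' /
    (Valued.v : Valuation R (WithZero (Multiplicative ℤ))).restrict s') (div_ne_zero
      ((Valuation.restrict_pos_iff _ _).mpr hr').ne'
      ((Valuation.restrict_pos_iff _ _).mpr hs').ne'), trivial, fun p hp => ?_⟩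
  replace hp : (Valued.v : Valuation R (WithZero (Multiplicative ℤ))).restrict (p.2 - p.1) <
    (Valued.v : Valuation R (WithZero (Multiplicative ℤ))).restrict r' / (Valued.v : Valuation R (WithZero (Multiplicative ℤ))).restrict s' := hp
  show (Valued.v : Valuation S (WithZero (Multiplicative ℤ))).restrict (f p.2 - f p.1) < γ.1
  rw [lt_div_iff₀ ((Valuation.restrict_pos_iff _ _).mpr hs'), ← map_mul,
    Valuation.restrict_lt_iff] at hp
  rw [← hrs, lt_div_iff₀ ((Valuation.restrict_pos_iff _ _).mpr hs), ← map_mul,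
    Valuation.restrict_lt_iff, ← map_sub, ← map_mul, h, h]
  exact hp

lemma uc_sigmaInv_fwd : @UniformContinuous (RatFunc K) (RatFunc K)
    (RatFunc.inftyValued K).toUniformSpace
    (inferInstance : UniformSpace (RatFunc K)) (sigmaInv K) :=
  uc_of_val_eq (RatFunc.inftyValued K) inferInstance (sigmaInv K)
    (fun y => ⟨sigmaInv K y, sigmaInv_sigmaInv K y⟩)
    (fun x => valuation_sigmaInv K x)

lemma uc_sigmaInv_bwd : @UniformContinuous (RatFunc K) (RatFunc K)
    (inferInstance : UniformSpace (RatFunc K))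
    (RatFunc.inftyValued K).toUniformSpace (sigmaInv K) :=
  uc_of_val_eq inferInstance (RatFunc.inftyValued K) (sigmaInv K)
    (fun y => ⟨sigmaInv K y, sigmaInv_sigmaInv K y⟩)
    (fun x => valuation_sigmaInv' K x)

/-- The adic completion of `RatFunc K` (with the instance uniformity). -/
abbrev AdicCompl : Type := UniformSpace.Completion (RatFunc K)

def adicCoe : RatFunc K →+* AdicCompl K :=
  UniformSpace.Completion.coeRingHom

lemma continuous_adicCoe : Continuous (adicCoe K) :=
  UniformSpace.Completion.continuous_coeRingHom

def inftyCoe : RatFunc K →+* RatFunc.CompletionAtInfty K :=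
  letI := RatFunc.inftyValued K
  UniformSpace.Completion.coeRingHom

lemma continuous_inftyCoe : @Continuous (RatFunc K) (RatFunc.CompletionAtInfty K)
    (RatFunc.inftyValued K).toUniformSpace.toTopologicalSpace _ (inftyCoe K) :=
  letI := RatFunc.inftyValued K
  UniformSpace.Completion.continuous_coeRingHom

instance : CompleteSpace (RatFunc.CompletionAtInfty K) :=
  @UniformSpace.Completion.completeSpace (RatFunc K) (RatFunc.inftyValued K).toUniformSpace

instance : T0Space (RatFunc.CompletionAtInfty K) :=
  @UniformSpace.Completion.t0Space (RatFunc K) (RatFunc.inftyValued K).toUniformSpace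

def adicComplUS : UniformSpace (AdicCompl K) := inferInstance
def adicComplRing : Ring (AdicCompl K) := inferInstance
def adicComplUAG : IsUniformAddGroup (AdicCompl K) := inferInstance
def adicComplTR : IsTopologicalRing (AdicCompl K) := inferInstance
def adicComplCS : CompleteSpace (AdicCompl K) := inferInstance
def adicComplT0 : T0Space (AdicCompl K) := inferInstance

lemma continuous_fwd : @Continuous (RatFunc K) (AdicCompl K)
    (RatFunc.inftyValued K).toUniformSpace.toTopologicalSpace _
    ((adicCoe K).comp (sigmaInv K)) :=
  @Continuous.comp (RatFunc K) (RatFunc K) (AdicCompl K)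
    (RatFunc.inftyValued K).toUniformSpace.toTopologicalSpace _ _
    (sigmaInv K) (adicCoe K)
    (continuous_adicCoe K)
    (@UniformContinuous.continuous _ _ (RatFunc.inftyValued K).toUniformSpace _ _ (uc_sigmaInv_fwd K))

lemma continuous_bwd : Continuous ((inftyCoe K).comp (sigmaInv K)) :=
  @Continuous.comp (RatFunc K) (RatFunc K) (RatFunc.CompletionAtInfty K)
    _ (RatFunc.inftyValued K).toUniformSpace.toTopologicalSpace _
    (sigmaInv K) (inftyCoe K)
    (continuous_inftyCoe K)
    (@UniformContinuous.continuous _ _ _ (RatFunc.inftyValued K).toUniformSpace _ (uc_sigmaInv_bwd K))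

def inftyToAdic : RatFunc.CompletionAtInfty K →+* AdicCompl K :=
  letI := RatFunc.inftyValued K
  @UniformSpace.Completion.extensionHom (RatFunc K) _ _ _ _
    (AdicCompl K) (adicComplUS K) (adicComplRing K) (adicComplUAG K) (adicComplTR K)
    ((adicCoe K).comp (sigmaInv K)) (continuous_fwd K) (adicComplCS K) (adicComplT0 K)

def adicToInfty : AdicCompl K →+* RatFunc.CompletionAtInfty K :=
  UniformSpace.Completion.extensionHom ((inftyCoe K).comp (sigmaInv K)) (continuous_bwd K)

lemma inftyToAdic_coe (f : RatFunc K) :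
    inftyToAdic K (inftyCoe K f) = adicCoe K (sigmaInv K f) := by
  letI := RatFunc.inftyValued K
  exact @UniformSpace.Completion.extensionHom_coe (RatFunc K) _ _ _ _
    (AdicCompl K) (adicComplUS K) (adicComplRing K) (adicComplUAG K) (adicComplTR K)
    ((adicCoe K).comp (sigmaInv K)) (continuous_fwd K) (adicComplCS K) (adicComplT0 K) f

lemma adicToInfty_coe (f : RatFunc K) :
    adicToInfty K (adicCoe K f) = inftyCoe K (sigmaInv K f) :=
  UniformSpace.Completion.extensionHom_coe _ (continuous_bwd K) f

lemma continuous_inftyToAdic : Continuous (inftyToAdic K) := by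
  letI := RatFunc.inftyValued K
  exact UniformSpace.Completion.continuous_extension
    (f := ⇑((adicCoe K).comp (sigmaInv K)))

lemma continuous_adicToInfty : Continuous (adicToInfty K) :=
  UniformSpace.Completion.continuous_extension
    (f := ⇑((inftyCoe K).comp (sigmaInv K)))

lemma adicToInfty_inftyToAdic (x : RatFunc.CompletionAtInfty K) :
    adicToInfty K (inftyToAdic K x) = x := by
  letI := RatFunc.inftyValued K
  refine UniformSpace.Completion.induction_on x ?_ (fun f => ?_)
  · exact isClosed_eq ((continuous_adicToInfty K).comp (continuous_inftyToAdic K)) continuous_id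
  · exact (by rw [inftyToAdic_coe, adicToInfty_coe, sigmaInv_sigmaInv] :
      adicToInfty K (inftyToAdic K (inftyCoe K f)) = inftyCoe K f)

lemma inftyToAdic_adicToInfty (x : AdicCompl K) :
    inftyToAdic K (adicToInfty K x) = x := by
  refine UniformSpace.Completion.induction_on x ?_ (fun f => ?_)
  · exact isClosed_eq ((continuous_inftyToAdic K).comp (continuous_adicToInfty K)) continuous_id
  · exact (by rw [adicToInfty_coe, inftyToAdic_coe, sigmaInv_sigmaInv] :
      inftyToAdic K (adicToInfty K (adicCoe K f)) = adicCoe K f)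

def inftyAdicEquiv : RatFunc.CompletionAtInfty K ≃+* AdicCompl K :=
  RingEquiv.ofRingHom (inftyToAdic K) (adicToInfty K)
    (RingHom.ext (inftyToAdic_adicToInfty K)) (RingHom.ext (adicToInfty_inftyToAdic K))

def laurentPkg : AbstractCompletion (RatFunc K) where
  space := LaurentSeries K
  coe := (↑)
  uniformStruct := inferInstance
  complete := inferInstance
  separation := inferInstance
  isUniformInducing := LaurentSeries.inducing_coe
  dense := LaurentSeries.coe_range_dense

def adicLaurentEquiv : AdicCompl K ≃+* LaurentSeries K :=
  { UniformSpace.Completion.cPkg.compareEquiv (laurentPkg K) with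
    map_mul' := (UniformSpace.Completion.extensionHom (algebraMap (RatFunc K) (LaurentSeries K))
      LaurentSeries.continuous_coe).map_mul
    map_add' := (UniformSpace.Completion.extensionHom (algebraMap (RatFunc K) (LaurentSeries K))
      LaurentSeries.continuous_coe).map_add }

lemma ratfuncAdicComplRingEquiv_coe (g : RatFunc K) :
    adicLaurentEquiv K (adicCoe K g) = (g : LaurentSeries K) := by
  exact AbstractCompletion.compare_coe UniformSpace.Completion.cPkg (laurentPkg K) g

/-- the final equivalence -/
def inftyLaurentEquiv : RatFunc.CompletionAtInfty K ≃+* LaurentSeries K :=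
  (inftyAdicEquiv K).trans (adicLaurentEquiv K)

lemma inftyLaurentEquiv_coe (g : RatFunc K) :
    inftyLaurentEquiv K (inftyCoe K g) = ((sigmaInv K g : RatFunc K) : LaurentSeries K) := by
  show adicLaurentEquiv K ((inftyAdicEquiv K) (inftyCoe K g)) = _
  rw [show (inftyAdicEquiv K) (inftyCoe K g) = inftyToAdic K (inftyCoe K g) from rfl,
    inftyToAdic_coe, ratfuncAdicComplRingEquiv_coe]

lemma continuous_inftyLaurentEquiv : Continuous (inftyLaurentEquiv K) := by
  have h2 : Continuous (adicLaurentEquiv K) :=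
    (show UniformContinuous (adicLaurentEquiv K) from
      (UniformSpace.Completion.cPkg (α := RatFunc K)).uniformContinuous_compare (laurentPkg K)).continuous
  exact h2.comp (continuous_inftyToAdic K)

lemma continuous_inftyLaurentEquiv_symm : Continuous (inftyLaurentEquiv K).symm := by
  have h2 : Continuous (adicLaurentEquiv K).symm :=
    (show UniformContinuous (adicLaurentEquiv K).symm from
      (laurentPkg K).uniformContinuous_compare (UniformSpace.Completion.cPkg (α := RatFunc K))).continuous
  exact (continuous_adicToInfty K).comp h2

end

/-- The completion of `𝔽_q(t)` at the place at infinity is the field `𝔽_q((u))` of formal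
Laurent series: there is an isomorphism of topological `𝔽_q`-algebras under which the
image of `t` corresponds to `u⁻¹`. -/
theorem completion_at_infinity_eq_laurent_series (Fq : Type) [Field Fq] [Fintype Fq]
    [DecidableEq (RatFunc Fq)] :
    ∃ e : RatFunc.CompletionAtInfty Fq ≃+* LaurentSeries Fq,
      Continuous e ∧ Continuous e.symm ∧
      (∀ c : Fq, e (ratFuncToFqtInfty Fq (RatFunc.C c)) = HahnSeries.C c) ∧
      e (ratFuncToFqtInfty Fq RatFunc.X)
        = ((PowerSeries.X : PowerSeries Fq) : LaurentSeries Fq)⁻¹ := by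
  refine ⟨inftyLaurentEquiv Fq, continuous_inftyLaurentEquiv Fq,
    continuous_inftyLaurentEquiv_symm Fq, fun c => ?_, ?_⟩
  · rw [show ratFuncToFqtInfty Fq (RatFunc.C c) = inftyCoe Fq (RatFunc.C c) from rfl,
      inftyLaurentEquiv_coe, sigmaInv_C, ← RatFunc.algebraMap_C]
    exact (RatFunc.coe_coe (Polynomial.C c)).symm.trans (by rw [Polynomial.coe_C, PowerSeries.coe_C])
  · rw [show ratFuncToFqtInfty Fq RatFunc.X = inftyCoe Fq RatFunc.X from rfl,
      inftyLaurentEquiv_coe, sigmaInv_X, map_inv₀, RatFunc.coe_X, PowerSeries.coe_X]
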